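/- For the inverse Sibuya process and t_1 ≤ t_2 in ℕ_0, E[L_α(t_1) L_α(t_2)] = ∑_{ℓ=1}^{t_1} binom(ℓ+α-1, ℓ) [binom(t_1-ℓ+α, t_1-ℓ) + binom(t_2-ℓ+α, t_2-ℓ) - 1]. -/

import Mathlib

open MeasureTheory ProbabilityTheory

/-- Generalized binomial coefficient `binom(x, k) = x(x-1)⋯(x-k+1)/k!` for real `x`. -/
noncomputable def gbinom (x : ℝ) (k : ℕ) : ℝ :=
  (∏ i ∈ Finset.range k, (x - i)) / (Nat.factorial k)

/-- Sibuya(α) probability mass function. -/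
noncomputable def sibuya (α : ℝ) (k : ℕ) : ℝ :=
  if k = 0 then 0 else (-1 : ℝ) ^ (k - 1) * gbinom α k

namespace SibAux

open Finset

lemma gbinom_zero (x : ℝ) : gbinom x 0 = 1 := by simp [gbinom]

lemma prod_shift (x : ℝ) (k : ℕ) :
    ∏ i ∈ range (k+1), (x - i) = x * ∏ i ∈ range k, (x - 1 - i) := by
  rw [Finset.prod_range_succ']
  simp only [Nat.cast_zero, sub_zero]
  rw [mul_comm]
  congr 1
  refine Finset.prod_congr rfl fun i _ => ?_
  push_cast; ring

lemma succ_mul_gbinom (x : ℝ) (k : ℕ) :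
    ((k : ℝ) + 1) * gbinom x (k+1) = x * gbinom (x - 1) k := by
  have hk : ((k.factorial : ℝ)) ≠ 0 := Nat.cast_ne_zero.2 k.factorial_ne_zero
  have hk1 : ((k : ℝ) + 1) ≠ 0 := by positivity
  simp only [gbinom, Nat.factorial_succ, prod_shift]
  push_cast
  field_simp

lemma sub_mul_gbinom (x : ℝ) (k : ℕ) :
    (x - k) * gbinom x k = x * gbinom (x - 1) k := by
  have hk : ((k.factorial : ℝ)) ≠ 0 := Nat.cast_ne_zero.2 k.factorial_ne_zero
  have h := prod_shift x k
  rw [Finset.prod_range_succ] at h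
  simp only [gbinom]
  field_simp
  linarith [h]

lemma pascal (x : ℝ) (k : ℕ) :
    gbinom x (k+1) = gbinom (x-1) (k+1) + gbinom (x-1) k := by
  have hk : ((k.factorial : ℝ)) ≠ 0 := Nat.cast_ne_zero.2 k.factorial_ne_zero
  have hk1 : ((k : ℝ) + 1) ≠ 0 := by positivity
  have h1 : gbinom x (k+1) = x * (∏ i ∈ range k, (x - 1 - i)) / ((k+1).factorial) := by
    rw [gbinom, prod_shift]
  have h2 : gbinom (x-1) (k+1)
      = (∏ i ∈ range k, (x - 1 - i)) * (x - 1 - k) / ((k+1).factorial) := by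
    rw [gbinom, Finset.prod_range_succ]
  rw [h1, h2, gbinom, Nat.factorial_succ]
  push_cast
  field_simp
  ring

lemma alt_sum (x : ℝ) (t : ℕ) :
    ∑ k ∈ range (t+1), (-1:ℝ)^k * gbinom x k = (-1:ℝ)^t * gbinom (x-1) t := by
  induction t with
  | zero => simp [gbinom_zero]
  | succ t ih =>
      rw [Finset.sum_range_succ, ih, pascal x t]
      ring

lemma gbinom_zero_left (k : ℕ) (hk : k ≠ 0) : gbinom 0 k = 0 := by
  simp only [gbinom]
  rw [Finset.prod_eq_zero (Finset.mem_range.2 (Nat.pos_of_ne_zero hk)) (by norm_num)]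
  simp

lemma vandermonde (n : ℕ) : ∀ x y : ℝ,
    gbinom (x + y) n = ∑ k ∈ range (n+1), gbinom x k * gbinom y (n - k) := by
  induction n with
  | zero => intro x y; simp [gbinom_zero]
  | succ n ih =>
      intro x y
      have hn1 : ((n : ℝ) + 1) ≠ 0 := by positivity
      apply mul_left_cancel₀ hn1
      have key1 : ∑ k ∈ range (n+2), ((k:ℝ)) * (gbinom x k * gbinom y (n+1-k))
          = x * gbinom (x - 1 + y) n := by
        rw [Finset.sum_range_succ']
        simp only [Nat.cast_zero, zero_mul, add_zero]
        rw [ih (x-1) y]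
        rw [Finset.mul_sum]
        refine Finset.sum_congr rfl fun i _ => ?_
        have h2 : n + 1 - (i+1) = n - i := by omega
        rw [h2]
        push_cast
        linear_combination (succ_mul_gbinom x i) * gbinom y (n - i)
      have key2 : ∑ k ∈ range (n+2), (((n+1-k : ℕ)):ℝ) * (gbinom x k * gbinom y (n+1-k))
          = y * gbinom (x + (y - 1)) n := by
        rw [Finset.sum_range_succ]
        simp only [Nat.sub_self, Nat.cast_zero, zero_mul, add_zero]
        rw [ih x (y-1)]
        rw [Finset.mul_sum]
        refine Finset.sum_congr rfl fun i hi => ?_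
        have hi' : i ≤ n := by simpa [Nat.lt_succ_iff] using hi
        have h2 : n + 1 - i = (n - i) + 1 := by omega
        rw [h2]
        push_cast
        linear_combination (succ_mul_gbinom y (n - i)) * gbinom x i
      have split : ((n:ℝ)+1) * ∑ k ∈ range (n+2), gbinom x k * gbinom y (n+1-k)
          = ∑ k ∈ range (n+2), ((k:ℝ)) * (gbinom x k * gbinom y (n+1-k))
            + ∑ k ∈ range (n+2), (((n+1-k : ℕ)):ℝ) * (gbinom x k * gbinom y (n+1-k)) := by
        rw [Finset.mul_sum, ← Finset.sum_add_distrib]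
        refine Finset.sum_congr rfl fun k hk => ?_
        have hk' : k ≤ n + 1 := by simpa [Nat.lt_succ_iff] using hk
        have : (((n+1-k : ℕ)):ℝ) = (n:ℝ) + 1 - k := by push_cast [hk']; ring
        rw [this]; ring
      rw [split, key1, key2]
      have hs : ((n:ℝ)+1) * gbinom (x+y) (n+1) = (x+y) * gbinom (x+y-1) n :=
        succ_mul_gbinom (x+y) n
      rw [hs]
      have e1 : x - 1 + y = x + y - 1 := by ring
      have e2 : x + (y - 1) = x + y - 1 := by ring
      rw [e1, e2]
      ring

end SibAux

namespace SibAux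

open Finset

noncomputable def bb (α : ℝ) (ℓ : ℕ) : ℝ := (-1:ℝ)^ℓ * gbinom (-α) ℓ

noncomputable def BB (α : ℝ) (u : ℕ) : ℝ := (-1:ℝ)^u * gbinom (-α-1) u

lemma bb_zero (α : ℝ) : bb α 0 = 1 := by simp [bb, gbinom_zero]

lemma neg_prod (α : ℝ) (n : ℕ) :
    ∏ i ∈ range n, (-α - i) = (-1:ℝ)^n * ∏ i ∈ range n, (α + i) := by
  calc ∏ i ∈ range n, (-α - (i:ℝ)) = ∏ i ∈ range n, ((-1) * (α + i)) :=
        Finset.prod_congr rfl fun i _ => by ring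
    _ = (-1:ℝ)^n * ∏ i ∈ range n, (α + i) := by
        rw [Finset.prod_mul_distrib, Finset.prod_const, Finset.card_range]

lemma bb_eq (α : ℝ) (ℓ : ℕ) : bb α ℓ = gbinom ((ℓ:ℝ) + α - 1) ℓ := by
  simp only [bb, gbinom, neg_prod]
  have h : ∏ i ∈ range ℓ, ((ℓ:ℝ) + α - 1 - i) = ∏ i ∈ range ℓ, (α + i) := by
    rw [← Finset.prod_range_reflect (fun i => α + i) ℓ]
    refine Finset.prod_congr rfl fun j hj => ?_
    have hj' : j < ℓ := Finset.mem_range.1 hj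
    have : ((ℓ - 1 - j : ℕ) : ℝ) = (ℓ:ℝ) - 1 - j := by
      have : j ≤ ℓ - 1 := by omega
      push_cast [Nat.cast_sub this, Nat.cast_sub (by omega : 1 ≤ ℓ)]
      ring
    rw [this]; ring
  rw [h]
  rw [← mul_div_assoc, ← mul_assoc, ← pow_add, ← two_mul, pow_mul]
  norm_num

lemma BB_eq (α : ℝ) (u : ℕ) : BB α u = gbinom ((u:ℝ) + α) u := by
  simp only [BB, gbinom]
  have hn : ∏ i ∈ range u, (-α - 1 - (i:ℝ)) = (-1:ℝ)^u * ∏ i ∈ range u, (α + 1 + i) := by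
    calc ∏ i ∈ range u, (-α - 1 - (i:ℝ)) = ∏ i ∈ range u, ((-1) * (α + 1 + i)) :=
          Finset.prod_congr rfl fun i _ => by ring
      _ = (-1:ℝ)^u * ∏ i ∈ range u, (α + 1 + i) := by
          rw [Finset.prod_mul_distrib, Finset.prod_const, Finset.card_range]
  have h : ∏ i ∈ range u, ((u:ℝ) + α - i) = ∏ i ∈ range u, (α + 1 + i) := by
    rw [← Finset.prod_range_reflect (fun i => α + 1 + i) u]
    refine Finset.prod_congr rfl fun j hj => ?_
    have hj' : j < u := Finset.mem_range.1 hj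
    have : ((u - 1 - j : ℕ) : ℝ) = (u:ℝ) - 1 - j := by
      have h1 : j ≤ u - 1 := by omega
      push_cast [Nat.cast_sub h1, Nat.cast_sub (by omega : 1 ≤ u)]
      ring
    rw [this]; ring
  rw [hn, h]
  rw [← mul_div_assoc, ← mul_assoc, ← pow_add, ← two_mul, pow_mul]
  norm_num

lemma BB_sum (α : ℝ) (u : ℕ) : BB α u = ∑ ℓ ∈ range (u+1), bb α ℓ := by
  simp only [bb, BB]
  rw [alt_sum (-α) u]

lemma sum_Icc_one (f : ℕ → ℝ) (n : ℕ) :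
    ∑ j ∈ Icc 1 n, f j = ∑ i ∈ range n, f (i+1) := by
  rw [← Finset.Ico_add_one_right_eq_Icc, Finset.sum_Ico_eq_sum_range]
  simp [add_comm]

lemma bb_rec (α : ℝ) (ℓ : ℕ) (hℓ : 1 ≤ ℓ) :
    bb α ℓ = ∑ j ∈ Icc 1 ℓ, sibuya α j * bb α (ℓ - j) := by
  have hv : (0:ℝ) = ∑ k ∈ range (ℓ+1), gbinom α k * gbinom (-α) (ℓ - k) := by
    have := vandermonde ℓ α (-α)
    rwa [add_neg_cancel, gbinom_zero_left ℓ (by omega)] at this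
  have hsplit : ∑ k ∈ range (ℓ+1), gbinom α k * gbinom (-α) (ℓ - k)
      = gbinom α 0 * gbinom (-α) ℓ + ∑ j ∈ Icc 1 ℓ, gbinom α j * gbinom (-α) (ℓ - j) := by
    rw [sum_Icc_one, Finset.sum_range_succ']
    simp [add_comm]
  have key : ∑ j ∈ Icc 1 ℓ, gbinom α j * gbinom (-α) (ℓ - j) = - gbinom (-α) ℓ := by
    have := hv.symm
    rw [hsplit] at this
    rw [gbinom_zero] at this
    linarith
  have hterm : ∀ j ∈ Icc 1 ℓ, sibuya α j * bb α (ℓ - j)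
      = (-1:ℝ)^(ℓ-1) * (gbinom α j * gbinom (-α) (ℓ - j)) := by
    intro j hj
    obtain ⟨hj1, hj2⟩ := Finset.mem_Icc.1 hj
    simp only [sibuya, bb, if_neg (by omega : j ≠ 0)]
    have hp : (-1:ℝ)^(j-1) * (-1:ℝ)^(ℓ-j) = (-1:ℝ)^(ℓ-1) := by
      rw [← pow_add]; congr 1; omega
    calc (-1:ℝ)^(j-1) * gbinom α j * ((-1:ℝ)^(ℓ-j) * gbinom (-α) (ℓ-j))
        = ((-1:ℝ)^(j-1) * (-1:ℝ)^(ℓ-j)) * (gbinom α j * gbinom (-α) (ℓ-j)) := by ring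
      _ = (-1:ℝ)^(ℓ-1) * (gbinom α j * gbinom (-α) (ℓ-j)) := by rw [hp]
  rw [Finset.sum_congr rfl hterm, ← Finset.mul_sum, key]
  simp only [bb]
  have hℓ' : (-1:ℝ)^ℓ = (-1:ℝ)^(ℓ-1) * (-1) := by
    conv_lhs => rw [show ℓ = (ℓ-1)+1 by omega]
    rw [pow_succ]
  rw [hℓ']
  ring

end SibAux

namespace SibAux

open Finset

noncomputable def rho (α : ℝ) : ℕ → ℕ → ℝ
  | 0, k => if k = 0 then 1 else 0
  | (n+1), k => ∑ j ∈ range (k+1), sibuya α j * rho α n (k - j)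

lemma rho_vanish (α : ℝ) : ∀ n k, k < n → rho α n k = 0 := by
  intro n
  induction n with
  | zero => omega
  | succ n ih =>
      intro k hk
      rw [rho]
      refine Finset.sum_eq_zero fun j hj => ?_
      have hj' := Finset.mem_range.1 hj
      rcases Nat.eq_zero_or_pos j with h0 | h1
      · simp [h0, sibuya]
      · rw [ih (k - j) (by omega)]
        ring

noncomputable def UU (α : ℝ) (ℓ : ℕ) : ℝ := ∑ m ∈ range (ℓ+1), rho α m ℓ

noncomputable def WW (α : ℝ) (ℓ : ℕ) : ℝ := ∑ m ∈ range (ℓ+1), (m:ℝ) * rho α m ℓ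

noncomputable def cc (α : ℝ) (ℓ : ℕ) : ℝ := ∑ i ∈ Icc 1 ℓ, bb α i * bb α (ℓ - i)

lemma sum_trunc (α : ℝ) (g : ℕ → ℝ) {ℓ u : ℕ} (h : ℓ ≤ u) :
    ∑ m ∈ range (u+1), g m * rho α m ℓ = ∑ m ∈ range (ℓ+1), g m * rho α m ℓ := by
  refine (Finset.sum_subset (by intro m hm; simp at *; omega) fun m _ hm => ?_).symm
  rw [rho_vanish α m ℓ (by simp at *; omega)]
  ring

lemma rho_step (α : ℝ) (g : ℕ → ℝ) {ℓ : ℕ} (hℓ : 1 ≤ ℓ) :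
    ∑ m ∈ range (ℓ+1), g m * rho α m ℓ
      = ∑ j ∈ Icc 1 ℓ, sibuya α j * ∑ m ∈ range (ℓ+1), g (m+1) * rho α m (ℓ - j) := by
  rw [Finset.sum_range_succ']
  have h0 : g 0 * rho α 0 ℓ = 0 := by
    rw [rho, if_neg (by omega)]; ring
  rw [h0, add_zero]
  have step : ∀ m ∈ range ℓ, g (m+1) * rho α (m+1) ℓ
      = ∑ j ∈ range (ℓ+1), sibuya α j * (g (m+1) * rho α m (ℓ - j)) := by
    intro m _
    rw [rho, Finset.mul_sum]
    exact Finset.sum_congr rfl fun j _ => by ring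
  rw [Finset.sum_congr rfl step, Finset.sum_comm]
  have hF : ∀ j ∈ range (ℓ+1),
      ∑ m ∈ range ℓ, sibuya α j * (g (m+1) * rho α m (ℓ - j))
        = sibuya α j * ∑ m ∈ range ℓ, g (m+1) * rho α m (ℓ - j) := fun j _ => by
    rw [Finset.mul_sum]
  rw [Finset.sum_congr rfl hF, Finset.sum_range_succ']
  have hz : sibuya α 0 * ∑ m ∈ range ℓ, g (m+1) * rho α m (ℓ - 0) = 0 := by
    simp [sibuya]
  rw [hz, add_zero,
    sum_Icc_one (fun j => sibuya α j * ∑ m ∈ range (ℓ+1), g (m+1) * rho α m (ℓ - j)) ℓ]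
  refine Finset.sum_congr rfl fun i hi => ?_
  congr 1
  have hrz : rho α ℓ (ℓ - (i+1)) = 0 :=
    rho_vanish α ℓ _ (by have := Finset.mem_range.1 hi; omega)
  rw [Finset.sum_range_succ, hrz, mul_zero, add_zero]

lemma UU_eq_bb (α : ℝ) (ℓ : ℕ) : UU α ℓ = bb α ℓ := by
  induction ℓ using Nat.strong_induction_on with
  | _ ℓ ih =>
    rcases Nat.eq_zero_or_pos ℓ with h0 | h1
    · subst h0
      simp [UU, rho, bb_zero]
    · have := rho_step α (fun _ => (1:ℝ)) h1
      simp only [one_mul] at this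
      rw [UU, this, bb_rec α ℓ h1]
      refine Finset.sum_congr rfl fun j hj => ?_
      obtain ⟨hj1, hj2⟩ := Finset.mem_Icc.1 hj
      congr 1
      have h3 : ℓ - j ≤ ℓ := by omega
      rw [show (∑ m ∈ range (ℓ+1), rho α m (ℓ - j))
            = ∑ m ∈ range (ℓ+1), (1:ℝ) * rho α m (ℓ - j) by simp,
          sum_trunc α (fun _ => (1:ℝ)) h3]
      simp only [one_mul]
      rw [← ih (ℓ - j) (by omega), UU]

lemma cc_zero (α : ℝ) : cc α 0 = 0 := by simp [cc]

lemma cc_rec (α : ℝ) {ℓ : ℕ} (hℓ : 1 ≤ ℓ) :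
    ∑ j ∈ Icc 1 ℓ, sibuya α j * (cc α (ℓ - j) + bb α (ℓ - j)) = cc α ℓ := by
  have hsplit : ∑ j ∈ Icc 1 ℓ, sibuya α j * (cc α (ℓ - j) + bb α (ℓ - j))
      = (∑ j ∈ Icc 1 ℓ, sibuya α j * cc α (ℓ - j))
        + ∑ j ∈ Icc 1 ℓ, sibuya α j * bb α (ℓ - j) := by
    rw [← Finset.sum_add_distrib]
    exact Finset.sum_congr rfl fun j _ => by ring
  rw [hsplit, ← bb_rec α ℓ hℓ]
  have hswap : ∑ j ∈ Icc 1 ℓ, sibuya α j * cc α (ℓ - j)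
      = ∑ i ∈ Icc 1 ℓ, bb α i * ∑ j ∈ Icc 1 (ℓ - i), sibuya α j * bb α (ℓ - i - j) := by
    simp only [cc, Finset.mul_sum, Finset.sum_mul]
    rw [Finset.sum_comm' (s := Icc 1 ℓ) (t := fun j => Icc 1 (ℓ - j)) (t' := Icc 1 ℓ)
      (s' := fun i => Icc 1 (ℓ - i)) (by intro j i; simp only [Finset.mem_Icc]; omega)]
    refine Finset.sum_congr rfl fun i hi => Finset.sum_congr rfl fun j hj => ?_
    have h1 : ℓ - j - i = ℓ - i - j := by omega
    rw [h1]; ring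
  rw [hswap]
  have hstep : ∀ i ∈ Icc 1 ℓ, bb α i * ∑ j ∈ Icc 1 (ℓ - i), sibuya α j * bb α (ℓ - i - j)
      = bb α i * bb α (ℓ - i) - (if i = ℓ then bb α ℓ else 0) := by
    intro i hi
    obtain ⟨hi1, hi2⟩ := Finset.mem_Icc.1 hi
    rcases eq_or_lt_of_le hi2 with h | h
    · subst h
      simp [Nat.sub_self, bb_zero]
    · rw [if_neg (by omega), ← bb_rec α (ℓ - i) (by omega), sub_zero]
  rw [Finset.sum_congr rfl hstep, Finset.sum_sub_distrib]
  rw [Finset.sum_ite_eq' (Icc 1 ℓ) ℓ (fun _ => bb α ℓ), if_pos (Finset.mem_Icc.2 ⟨hℓ, le_refl ℓ⟩)]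
  show cc α ℓ - bb α ℓ + bb α ℓ = cc α ℓ
  ring

lemma WW_eq_cc (α : ℝ) (ℓ : ℕ) : WW α ℓ = cc α ℓ := by
  induction ℓ using Nat.strong_induction_on with
  | _ ℓ ih =>
    rcases Nat.eq_zero_or_pos ℓ with h0 | h1
    · subst h0
      simp [WW, cc_zero]
    · have := rho_step α (fun m => (m:ℝ)) h1
      rw [WW, this, ← cc_rec α h1]
      refine Finset.sum_congr rfl fun j hj => ?_
      obtain ⟨hj1, hj2⟩ := Finset.mem_Icc.1 hj
      congr 1
      have h3 : ℓ - j ≤ ℓ := by omega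
      have hdist : ∑ m ∈ range (ℓ+1), ((m:ℝ)+1) * rho α m (ℓ - j)
          = (∑ m ∈ range (ℓ+1), (m:ℝ) * rho α m (ℓ - j))
            + ∑ m ∈ range (ℓ+1), (1:ℝ) * rho α m (ℓ - j) := by
        rw [← Finset.sum_add_distrib]
        exact Finset.sum_congr rfl fun m _ => by ring
      push_cast
      rw [hdist, sum_trunc α (fun m => (m:ℝ)) h3, sum_trunc α (fun _ => (1:ℝ)) h3]
      have e1 : ∑ m ∈ range (ℓ - j + 1), (m:ℝ) * rho α m (ℓ - j) = cc α (ℓ - j) := by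
        rw [← WW]; exact ih (ℓ - j) (by omega)
      have e2 : ∑ m ∈ range (ℓ - j + 1), (1:ℝ) * rho α m (ℓ - j) = bb α (ℓ - j) := by
        simp only [one_mul]; rw [← UU]; exact UU_eq_bb α (ℓ - j)
      rw [e1, e2]

end SibAux

namespace SibAux

open Finset

noncomputable def QQ (α : ℝ) (k u : ℕ) : ℝ := ∑ ℓ ∈ range (u+1), rho α k ℓ

lemma QQ_vanish (α : ℝ) {k u : ℕ} (h : u < k) : QQ α k u = 0 := by
  refine Finset.sum_eq_zero fun ℓ hℓ => ?_
  exact rho_vanish α k ℓ (by have := Finset.mem_range.1 hℓ; omega)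

lemma rho_zero_fun (α : ℝ) (ℓ : ℕ) : rho α 0 ℓ = if ℓ = 0 then 1 else 0 := by rw [rho]

lemma Icc_rho (α : ℝ) (g : ℕ → ℝ) {ℓ u : ℕ} (h : ℓ ≤ u) :
    ∑ k ∈ Icc 1 u, g k * rho α k ℓ
      = (∑ k ∈ range (ℓ+1), g k * rho α k ℓ) - g 0 * rho α 0 ℓ := by
  rw [sum_Icc_one (fun k => g k * rho α k ℓ) u]
  have h2 := Finset.sum_range_succ' (fun k => g k * rho α k ℓ) u
  rw [sum_trunc α g h] at h2
  linarith

lemma M_eq (α : ℝ) (u : ℕ) : ∑ k ∈ Icc 1 u, QQ α k u = BB α u - 1 := by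
  simp only [QQ]
  rw [Finset.sum_comm]
  have h1 : ∀ ℓ ∈ range (u+1), ∑ k ∈ Icc 1 u, rho α k ℓ
      = bb α ℓ - (if ℓ = 0 then (1:ℝ) else 0) := by
    intro ℓ hℓ
    have hlu : ℓ ≤ u := by have := Finset.mem_range.1 hℓ; omega
    have := Icc_rho α (fun _ => (1:ℝ)) hlu
    simp only [one_mul] at this
    rw [this, ← UU, UU_eq_bb, rho_zero_fun]
  rw [Finset.sum_congr rfl h1, Finset.sum_sub_distrib, ← BB_sum]
  rw [Finset.sum_ite_eq' (range (u+1)) 0 (fun _ => (1:ℝ)),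
    if_pos (Finset.mem_range.2 (by omega))]

lemma D_eq (α : ℝ) (t : ℕ) :
    ∑ m ∈ Icc 1 t, (m:ℝ) * QQ α m t = ∑ ℓ ∈ Icc 1 t, bb α ℓ * BB α (t - ℓ) := by
  simp only [QQ, Finset.mul_sum]
  rw [Finset.sum_comm]
  have h1 : ∀ ℓ ∈ range (t+1), ∑ m ∈ Icc 1 t, (m:ℝ) * rho α m ℓ = cc α ℓ := by
    intro ℓ hℓ
    have hlu : ℓ ≤ t := by have := Finset.mem_range.1 hℓ; omega
    rw [Icc_rho α (fun m => (m:ℝ)) hlu]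
    push_cast
    rw [← WW, WW_eq_cc]
    ring
  rw [Finset.sum_congr rfl h1]
  unfold cc
  rw [Finset.sum_comm' (s := range (t+1)) (t := fun ℓ => Icc 1 ℓ) (t' := Icc 1 t)
    (s' := fun i => Icc i t)
    (by intro ℓ i; simp only [Finset.mem_Icc, Finset.mem_range]; omega)]
  refine Finset.sum_congr rfl fun i hi => ?_
  obtain ⟨hi1, hi2⟩ := Finset.mem_Icc.1 hi
  rw [← Finset.mul_sum]
  congr 1
  rw [← Finset.Ico_add_one_right_eq_Icc, Finset.sum_Ico_eq_sum_range, BB_sum]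
  have hc : t + 1 - i = (t - i) + 1 := by omega
  rw [hc]
  exact Finset.sum_congr rfl fun m _ => by congr 1; omega

lemma alg_main (α : ℝ) (t₁ t₂ : ℕ) (ht : t₁ ≤ t₂) :
    ∑ m ∈ Icc 1 t₁, ((m:ℝ) * QQ α m t₁
        + ∑ ℓ ∈ range (t₁+1), rho α m ℓ * (∑ k ∈ Icc 1 (t₂ - m), QQ α k (t₂ - ℓ)))
      = ∑ ℓ ∈ Icc 1 t₁, bb α ℓ * (BB α (t₁ - ℓ) + BB α (t₂ - ℓ) - 1) := by
  have h1 : ∀ m ∈ Icc 1 t₁, ∀ ℓ ∈ range (t₁+1),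
      rho α m ℓ * (∑ k ∈ Icc 1 (t₂ - m), QQ α k (t₂ - ℓ))
        = rho α m ℓ * (BB α (t₂ - ℓ) - 1) := by
    intro m hm ℓ hℓ
    obtain ⟨hm1, hm2⟩ := Finset.mem_Icc.1 hm
    rcases Nat.lt_or_ge ℓ m with h | h
    · rw [rho_vanish α m ℓ h]; ring
    · congr 1
      rw [← M_eq α (t₂ - ℓ)]
      refine (Finset.sum_subset (by intro k hk; simp only [Finset.mem_Icc] at *; omega)
        fun k hk hk' => ?_).symm
      refine QQ_vanish α ?_
      simp only [Finset.mem_Icc] at hk hk'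
      omega
  have h2 : ∀ m ∈ Icc 1 t₁, (m:ℝ) * QQ α m t₁
        + ∑ ℓ ∈ range (t₁+1), rho α m ℓ * (∑ k ∈ Icc 1 (t₂ - m), QQ α k (t₂ - ℓ))
      = (m:ℝ) * QQ α m t₁ + ∑ ℓ ∈ range (t₁+1), rho α m ℓ * (BB α (t₂ - ℓ) - 1) := by
    intro m hm
    congr 1
    exact Finset.sum_congr rfl (h1 m hm)
  rw [Finset.sum_congr rfl h2, Finset.sum_add_distrib, D_eq]
  have h3 : ∑ m ∈ Icc 1 t₁, ∑ ℓ ∈ range (t₁+1), rho α m ℓ * (BB α (t₂ - ℓ) - 1)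
      = ∑ ℓ ∈ Icc 1 t₁, bb α ℓ * (BB α (t₂ - ℓ) - 1) := by
    rw [Finset.sum_comm]
    have h4 : ∀ ℓ ∈ range (t₁+1), ∑ m ∈ Icc 1 t₁, rho α m ℓ * (BB α (t₂ - ℓ) - 1)
        = (bb α ℓ - (if ℓ = 0 then (1:ℝ) else 0)) * (BB α (t₂ - ℓ) - 1) := by
      intro ℓ hℓ
      have hlu : ℓ ≤ t₁ := by have := Finset.mem_range.1 hℓ; omega
      rw [← Finset.sum_mul]
      congr 1
      have := Icc_rho α (fun _ => (1:ℝ)) hlu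
      simp only [one_mul] at this
      rw [this, ← UU, UU_eq_bb, rho_zero_fun]
    rw [Finset.sum_congr rfl h4, Finset.sum_range_succ']
    have hz : (bb α 0 - (if (0:ℕ) = 0 then (1:ℝ) else 0)) * (BB α (t₂ - 0) - 1) = 0 := by
      rw [bb_zero, if_pos rfl]; ring
    rw [hz, add_zero, sum_Icc_one (fun ℓ => bb α ℓ * (BB α (t₂ - ℓ) - 1)) t₁]
    refine Finset.sum_congr rfl fun i _ => ?_
    rw [if_neg (by omega : ¬ i + 1 = 0)]
    ring
  rw [h3, ← Finset.sum_add_distrib]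
  exact Finset.sum_congr rfl fun ℓ _ => by ring

end SibAux

namespace SibAux

open Finset

variable {Ω : Type*} [MeasurableSpace Ω] {μ : Measure Ω} [IsProbabilityMeasure μ]

lemma indepFun_sum_sum {Z : ℕ → Ω → ℕ} (hmeas : ∀ i, Measurable (Z i))
    (hindep : iIndepFun Z μ) {s t : Finset ℕ} (hst : Disjoint s t) :
    IndepFun (fun ω => ∑ j ∈ s, Z j ω) (fun ω => ∑ j ∈ t, Z j ω) μ := by
  have h := hindep.indepFun_finset s t hst hmeas
  have gs : ∀ (u : Finset ℕ), Measurable (fun v : ((_ : u) → ℕ) => ∑ i ∈ u.attach, v i) :=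
    fun u => Finset.measurable_sum _ (fun i _ => measurable_pi_apply i)
  have h2 := h.comp (gs s) (gs t)
  have e : ∀ (u : Finset ℕ),
      ((fun v : ((_ : u) → ℕ) => ∑ i ∈ u.attach, v i) ∘ (fun a (i : u) => Z i a))
        = fun ω => ∑ j ∈ u, Z j ω := by
    intro u
    funext a
    simp only [Function.comp_apply]
    exact Finset.sum_attach u (fun j => Z j a)
  rwa [e s, e t] at h2

omit [IsProbabilityMeasure μ] in
lemma measure_add_eq {X Y : Ω → ℕ} (hX : Measurable X) (hY : Measurable Y)
    (h : IndepFun X Y μ) (k : ℕ) :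
    μ {ω | X ω + Y ω = k}
      = ∑ j ∈ range (k+1), μ {ω | X ω = j} * μ {ω | Y ω = k - j} := by
  have hset : {ω | X ω + Y ω = k}
      = ⋃ j ∈ range (k+1), ({ω | X ω = j} ∩ {ω | Y ω = k - j}) := by
    ext ω
    simp only [Set.mem_setOf_eq, Set.mem_iUnion, Set.mem_inter_iff, Finset.mem_range,
      exists_prop]
    constructor
    · intro hxy; exact ⟨X ω, by omega, rfl, by omega⟩
    · rintro ⟨j, hj, hXj, hYj⟩; omega
  rw [hset, measure_biUnion_finset]
  · refine Finset.sum_congr rfl fun j hj => ?_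
    exact h.measure_inter_preimage_eq_mul {j} {k - j}
      (measurableSet_singleton j) (measurableSet_singleton (k - j))
  · intro a _ b _ hab
    simp only [Function.onFun]
    refine Set.disjoint_left.2 fun ω hωa hωb => hab ?_
    simp only [Set.mem_inter_iff, Set.mem_setOf_eq] at hωa hωb
    omega
  · intro j _
    exact (hX (measurableSet_singleton j)).inter (hY (measurableSet_singleton (k - j)))

lemma law_sum {Z : ℕ → Ω → ℕ} (hmeas : ∀ i, Measurable (Z i))
    (hindep : iIndepFun Z μ) {α : ℝ}
    (hlaw : ∀ i k, (μ {ω | Z i ω = k}).toReal = sibuya α k)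
    (s : Finset ℕ) (k : ℕ) :
    (μ {ω | ∑ j ∈ s, Z j ω = k}).toReal = rho α s.card k := by
  induction s using Finset.induction_on generalizing k with
  | empty =>
      simp only [Finset.sum_empty, Finset.card_empty, rho_zero_fun]
      rcases eq_or_ne k 0 with h | h
      · subst h
        have : {ω : Ω | 0 = 0} = Set.univ := by ext ω; simp
        simp [this]
      · have : {ω : Ω | 0 = k} = ∅ := by ext ω; simp [Ne.symm h]
        simp [this, Ne.symm h, h]
  | @insert i s hi ih =>
      have hsum : ∀ ω, ∑ j ∈ insert i s, Z j ω = Z i ω + ∑ j ∈ s, Z j ω := by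
        intro ω; rw [Finset.sum_insert hi]
      have hT : Measurable (fun ω => ∑ j ∈ s, Z j ω) :=
        Finset.measurable_sum _ (fun j _ => hmeas j)
      have hdisj : Disjoint ({i} : Finset ℕ) s := by simpa using hi
      have hInd : IndepFun (Z i) (fun ω => ∑ j ∈ s, Z j ω) μ := by
        have := indepFun_sum_sum hmeas hindep hdisj
        simpa using this
      have hset : {ω | ∑ j ∈ insert i s, Z j ω = k}
          = {ω | Z i ω + (fun ω => ∑ j ∈ s, Z j ω) ω = k} := by
        ext ω; simp [hsum ω]
      rw [hset, measure_add_eq (hmeas i) hT hInd k]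
      rw [ENNReal.toReal_sum (fun j _ => by
        exact ENNReal.mul_ne_top (measure_ne_top μ _) (measure_ne_top μ _))]
      rw [Finset.card_insert_of_notMem hi, rho]
      refine Finset.sum_congr rfl fun j _ => ?_
      rw [ENNReal.toReal_mul, hlaw i j, ih (k - j)]

lemma law_le {Z : ℕ → Ω → ℕ} (hmeas : ∀ i, Measurable (Z i))
    (hindep : iIndepFun Z μ) {α : ℝ}
    (hlaw : ∀ i k, (μ {ω | Z i ω = k}).toReal = sibuya α k)
    (s : Finset ℕ) (u : ℕ) :
    (μ {ω | ∑ j ∈ s, Z j ω ≤ u}).toReal = QQ α s.card u := by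
  have hset : {ω | ∑ j ∈ s, Z j ω ≤ u}
      = ⋃ ℓ ∈ range (u+1), {ω | ∑ j ∈ s, Z j ω = ℓ} := by
    ext ω
    simp only [Set.mem_setOf_eq, Set.mem_iUnion, Finset.mem_range, exists_prop]
    constructor
    · intro h; exact ⟨_, by omega, rfl⟩
    · rintro ⟨ℓ, hℓ, h⟩; omega
  have hT : Measurable (fun ω => ∑ j ∈ s, Z j ω) :=
    Finset.measurable_sum _ (fun j _ => hmeas j)
  rw [hset, measure_biUnion_finset]
  · rw [ENNReal.toReal_sum (fun j _ => measure_ne_top μ _)]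
    exact Finset.sum_congr rfl fun ℓ _ => law_sum hmeas hindep hlaw s ℓ
  · intro a _ b _ hab
    simp only [Function.onFun]
    refine Set.disjoint_left.2 fun ω hωa hωb => hab ?_
    simp only [Set.mem_setOf_eq] at hωa hωb
    omega
  · intro ℓ _
    exact hT (measurableSet_singleton ℓ)

end SibAux


/-- For the inverse Sibuya process and `t₁ ≤ t₂`,
`E[L_α(t₁) L_α(t₂)] = ∑_{ℓ=1}^{t₁} binom(ℓ+α-1, ℓ)
  [binom(t₁-ℓ+α, t₁-ℓ) + binom(t₂-ℓ+α, t₂-ℓ) - 1]`. -/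
theorem sibuya_inverse_cross_moment
    {Ω : Type*} [MeasurableSpace Ω] (μ : Measure Ω) [IsProbabilityMeasure μ]
    (α : ℝ) (hα : α ∈ Set.Ioo (0 : ℝ) 1)
    (Z : ℕ → Ω → ℕ) (hmeas : ∀ i, Measurable (Z i))
    (hindep : iIndepFun Z μ)
    (hlaw : ∀ i k, (μ {ω | Z i ω = k}).toReal = sibuya α k)
    (S : ℕ → Ω → ℕ) (hS : ∀ n ω, S n ω = ∑ j ∈ Finset.range n, Z j ω)
    (L : ℕ → Ω → ℕ) (hL : ∀ t ω, L t ω = sSup {n : ℕ | S n ω ≤ t})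
    (t₁ t₂ : ℕ) (ht : t₁ ≤ t₂) :
    ∫ ω, (L t₁ ω : ℝ) * (L t₂ ω : ℝ) ∂μ
      = ∑ ℓ ∈ Finset.Icc 1 t₁, gbinom ((ℓ : ℝ) + α - 1) ℓ *
          (gbinom (((t₁ - ℓ : ℕ) : ℝ) + α) (t₁ - ℓ)
            + gbinom (((t₂ - ℓ : ℕ) : ℝ) + α) (t₂ - ℓ) - 1) := by
  classical
  open SibAux Finset in
  have hSmeas : ∀ n, Measurable (S n) := by
    intro n
    have h : S n = fun ω => ∑ j ∈ Finset.range n, Z j ω := funext (hS n)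
    rw [h]
    exact Finset.measurable_sum _ (fun j _ => hmeas j)
  set N : Set Ω := ⋃ i, {ω | Z i ω = 0} with hN
  have hNnull : μ N = 0 := by
    refine measure_iUnion_null fun i => ?_
    have h := hlaw i 0
    rw [sibuya, if_pos rfl] at h
    exact ((ENNReal.toReal_eq_zero_iff _).1 h).resolve_right (measure_ne_top μ _)
  have hSmono : ∀ (ω : Ω) {a b : ℕ}, a ≤ b → S a ω ≤ S b ω := by
    intro ω a b hab
    rw [hS, hS]
    exact Finset.sum_le_sum_of_subset (Finset.range_subset_range.2 hab)
  -- pointwise representation off N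
  have hLrep : ∀ (t : ℕ), ∀ ω ∉ N,
      (L t ω : ℝ) = ∑ n ∈ Finset.Icc 1 t, (if S n ω ≤ t then (1:ℝ) else 0) := by
    intro t ω hω
    simp only [hN, Set.mem_iUnion, Set.mem_setOf_eq, not_exists] at hω
    have hZ1 : ∀ i, 1 ≤ Z i ω := fun i => Nat.one_le_iff_ne_zero.2 (hω i)
    have hnS : ∀ n, n ≤ S n ω := by
      intro n
      rw [hS]
      calc n = ∑ _j ∈ Finset.range n, 1 := by simp
        _ ≤ ∑ j ∈ Finset.range n, Z j ω := Finset.sum_le_sum fun j _ => hZ1 j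
    have h0K : 0 ∈ {n : ℕ | S n ω ≤ t} := by
      have h0 : S 0 ω = 0 := by rw [hS]; simp
      simp only [Set.mem_setOf_eq, h0]
      omega
    have hbdd : BddAbove {n : ℕ | S n ω ≤ t} := by
      refine ⟨t, fun n hn => ?_⟩
      have := hnS n
      simp only [Set.mem_setOf_eq] at hn
      omega
    have hmem' := Nat.sSup_mem ⟨0, h0K⟩ hbdd
    set M := sSup {n : ℕ | S n ω ≤ t} with hM
    have hmem : S M ω ≤ t := hmem'
    have hsub : M ≤ t := by have := hnS M; omega
    have hiff : ∀ n, S n ω ≤ t ↔ n ≤ M := by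
      intro n
      constructor
      · intro h; exact le_csSup hbdd h
      · intro h
        have := hSmono ω h
        omega
    have hcong : ∀ n ∈ Finset.Icc 1 t,
        (if S n ω ≤ t then (1:ℝ) else 0) = (if n ≤ M then (1:ℝ) else 0) :=
      fun n _ => by rw [if_congr (hiff n) rfl rfl]
    rw [Finset.sum_congr rfl hcong, Finset.sum_boole]
    have hfilt : (Finset.Icc 1 t).filter (fun n => n ≤ M) = Finset.Icc 1 M := by
      ext n
      simp only [Finset.mem_filter, Finset.mem_Icc]
      omega
    rw [hfilt, Nat.card_Icc, hL, ← hM]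
    norm_num
  -- the events
  set E : ℕ → ℕ → Set Ω := fun n t => {ω | S n ω ≤ t} with hE
  have hEmeas : ∀ n t, MeasurableSet (E n t) :=
    fun n t => hSmeas n (MeasurableSet.of_discrete (s := {x | x ≤ t}))
  -- a.e. rewrite of the integrand
  have hae : ∀ᵐ ω ∂μ, (L t₁ ω : ℝ) * (L t₂ ω : ℝ)
      = ∑ m ∈ Finset.Icc 1 t₁, ∑ n ∈ Finset.Icc 1 t₂,
          Set.indicator (E m t₁ ∩ E n t₂) (fun _ => (1:ℝ)) ω := by
    rw [MeasureTheory.ae_iff]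
    refine measure_mono_null (fun ω hω => ?_) hNnull
    simp only [Set.mem_setOf_eq] at hω
    by_contra hωN
    apply hω
    rw [hLrep t₁ ω hωN, hLrep t₂ ω hωN, Finset.sum_mul_sum]
    refine Finset.sum_congr rfl fun m _ => Finset.sum_congr rfl fun n _ => ?_
    rw [Set.indicator_apply]
    by_cases h1 : S m ω ≤ t₁ <;> by_cases h2 : S n ω ≤ t₂ <;>
      simp [hE, h1, h2, Set.mem_inter_iff, Set.mem_setOf_eq]
  rw [integral_congr_ae hae]
  have hint : ∀ (s : Set Ω), MeasurableSet s →
      Integrable (Set.indicator s (fun _ => (1:ℝ))) μ := fun s hs =>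
    (integrable_indicator_iff hs).2 (integrableOn_const (measure_ne_top μ s))
  rw [integral_finset_sum _ (fun m _ => integrable_finset_sum _
    (fun n _ => hint _ ((hEmeas m t₁).inter (hEmeas n t₂))))]
  have hii : ∀ m ∈ Finset.Icc 1 t₁,
      ∫ ω, (∑ n ∈ Finset.Icc 1 t₂,
          Set.indicator (E m t₁ ∩ E n t₂) (fun _ => (1:ℝ)) ω) ∂μ
        = ∑ n ∈ Finset.Icc 1 t₂, (μ (E m t₁ ∩ E n t₂)).toReal := by
    intro m _
    rw [integral_finset_sum _ (fun n _ => hint _ ((hEmeas m t₁).inter (hEmeas n t₂)))]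
    refine Finset.sum_congr rfl fun n _ => ?_
    rw [MeasureTheory.integral_indicator_const (1:ℝ) ((hEmeas m t₁).inter (hEmeas n t₂))]
    simp [Measure.real]
  rw [Finset.sum_congr rfl hii]
  have hlaw_le : ∀ (s : Finset ℕ) (u : ℕ),
      (μ {ω | ∑ j ∈ s, Z j ω ≤ u}).toReal = SibAux.QQ α s.card u :=
    SibAux.law_le hmeas hindep hlaw
  have hES : ∀ n t, E n t = {ω | ∑ j ∈ Finset.range n, Z j ω ≤ t} := by
    intro n t
    ext ω
    simp only [hE, Set.mem_setOf_eq, hS]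
  have hcase1 : ∀ m ∈ Finset.Icc 1 t₁, ∀ n ∈ Finset.Ioc 0 m,
      (μ (E m t₁ ∩ E n t₂)).toReal = SibAux.QQ α m t₁ := by
    intro m hm n hn
    obtain ⟨hn1, hn2⟩ := Finset.mem_Ioc.1 hn
    have hsub : E m t₁ ⊆ E n t₂ := fun ω hω => by
      simp only [hE, Set.mem_setOf_eq] at *
      have := hSmono ω hn2
      omega
    rw [Set.inter_eq_left.2 hsub, hES m t₁]
    have := hlaw_le (Finset.range m) t₁
    rwa [Finset.card_range] at this
  have hcase2 : ∀ m ∈ Finset.Icc 1 t₁, ∀ n ∈ Finset.Ioc m t₂,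
      (μ (E m t₁ ∩ E n t₂)).toReal
        = ∑ ℓ ∈ Finset.range (t₁+1), SibAux.rho α m ℓ * SibAux.QQ α (n - m) (t₂ - ℓ) := by
    intro m hm n hn
    obtain ⟨hmn, hnt⟩ := Finset.mem_Ioc.1 hn
    obtain ⟨hm1, hm2⟩ := Finset.mem_Icc.1 hm
    have hTmeas : Measurable (fun ω => ∑ j ∈ Finset.Ico m n, Z j ω) :=
      Finset.measurable_sum _ (fun j _ => hmeas j)
    have hST : ∀ ω, S n ω = S m ω + ∑ j ∈ Finset.Ico m n, Z j ω := by
      intro ω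
      rw [hS, hS, Finset.range_eq_Ico,
        ← Finset.sum_Ico_consecutive _ (Nat.zero_le m) (le_of_lt hmn), Finset.range_eq_Ico]
    have hsplit : E m t₁ ∩ E n t₂
        = ⋃ ℓ ∈ Finset.range (t₁+1),
            ({ω | S m ω = ℓ} ∩ {ω | ∑ j ∈ Finset.Ico m n, Z j ω ≤ t₂ - ℓ}) := by
      ext ω
      simp only [hE, Set.mem_inter_iff, Set.mem_setOf_eq, Set.mem_iUnion, Finset.mem_range,
        exists_prop]
      constructor
      · rintro ⟨h1, h2⟩
        refine ⟨S m ω, by omega, rfl, ?_⟩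
        have := hST ω
        omega
      · rintro ⟨ℓ, hℓ, h1, h2⟩
        have := hST ω
        constructor <;> omega
    rw [hsplit, measure_biUnion_finset ?disj ?meas]
    case disj =>
      intro a _ b _ hab
      simp only [Function.onFun]
      refine Set.disjoint_left.2 fun ω h1 h2 => hab ?_
      simp only [Set.mem_inter_iff, Set.mem_setOf_eq] at h1 h2
      omega
    case meas =>
      intro ℓ _
      exact (hSmeas m (MeasurableSet.of_discrete (s := {ℓ}))).inter
        (hTmeas (MeasurableSet.of_discrete (s := {x | x ≤ t₂ - ℓ})))
    rw [ENNReal.toReal_sum (fun ℓ _ => measure_ne_top μ _)]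
    refine Finset.sum_congr rfl fun ℓ _ => ?_
    have hind : IndepFun (fun ω => ∑ j ∈ Finset.range m, Z j ω)
        (fun ω => ∑ j ∈ Finset.Ico m n, Z j ω) μ := by
      refine SibAux.indepFun_sum_sum hmeas hindep ?_
      refine Finset.disjoint_left.2 fun a ha hb => ?_
      simp only [Finset.mem_range, Finset.mem_Ico] at ha hb
      omega
    have heq1 : {ω | S m ω = ℓ} = (fun ω => ∑ j ∈ Finset.range m, Z j ω) ⁻¹' {ℓ} := by
      ext ω
      simp [hS, Set.mem_setOf_eq]
    have heq2 : {ω | ∑ j ∈ Finset.Ico m n, Z j ω ≤ t₂ - ℓ}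
        = (fun ω => ∑ j ∈ Finset.Ico m n, Z j ω) ⁻¹' (Set.Iic (t₂ - ℓ)) := rfl
    rw [heq1, heq2,
      hind.measure_inter_preimage_eq_mul _ _ MeasurableSet.of_discrete MeasurableSet.of_discrete,
      ENNReal.toReal_mul]
    have e1 : (μ ((fun ω => ∑ j ∈ Finset.range m, Z j ω) ⁻¹' {ℓ})).toReal
        = SibAux.rho α m ℓ := by
      have := SibAux.law_sum hmeas hindep hlaw (Finset.range m) ℓ
      rwa [Finset.card_range] at this
    have e2 : (μ ((fun ω => ∑ j ∈ Finset.Ico m n, Z j ω) ⁻¹' Set.Iic (t₂ - ℓ))).toReal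
        = SibAux.QQ α (n - m) (t₂ - ℓ) := by
      have := hlaw_le (Finset.Ico m n) (t₂ - ℓ)
      rwa [Nat.card_Ico] at this
    rw [e1, e2]
  have hfinal : ∀ m ∈ Finset.Icc 1 t₁,
      ∑ n ∈ Finset.Icc 1 t₂, (μ (E m t₁ ∩ E n t₂)).toReal
        = (m:ℝ) * SibAux.QQ α m t₁
          + ∑ ℓ ∈ Finset.range (t₁+1), SibAux.rho α m ℓ
              * (∑ k ∈ Finset.Icc 1 (t₂ - m), SibAux.QQ α k (t₂ - ℓ)) := by
    intro m hm
    obtain ⟨hm1, hm2⟩ := Finset.mem_Icc.1 hm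
    have hIcc : Finset.Icc 1 t₂ = Finset.Ioc 0 t₂ := by rw [← Finset.Icc_add_one_left_eq_Ioc, zero_add]
    rw [hIcc, ← Finset.sum_Ioc_consecutive _ (Nat.zero_le m) (le_trans hm2 ht)]
    congr 1
    · rw [Finset.sum_congr rfl (hcase1 m hm), Finset.sum_const, Nat.card_Ioc]
      simp [nsmul_eq_mul]
    · rw [Finset.sum_congr rfl (hcase2 m hm), Finset.sum_comm]
      refine Finset.sum_congr rfl fun ℓ _ => ?_
      rw [Finset.mul_sum]
      have hIoc : Finset.Ioc m t₂ = Finset.Ico (m+1) (t₂+1) := by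
        rw [Finset.Ico_add_one_right_eq_Icc, Finset.Icc_add_one_left_eq_Ioc]
      rw [hIoc, Finset.sum_Ico_eq_sum_range,
        SibAux.sum_Icc_one (fun k => SibAux.rho α m ℓ * SibAux.QQ α k (t₂ - ℓ)) (t₂ - m)]
      have he : t₂ + 1 - (m + 1) = t₂ - m := by omega
      rw [he]
      refine Finset.sum_congr rfl fun i _ => ?_
      congr 2
      omega
  rw [Finset.sum_congr rfl hfinal, SibAux.alg_main α t₁ t₂ ht]
  exact Finset.sum_congr rfl fun ℓ _ => by rw [SibAux.bb_eq, SibAux.BB_eq, SibAux.BB_eq]
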